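/- For every finite two-player game, the supremum over all commitments (σ, P) — with σ ∈ Δ(A) and P : A × B → ℝ≥0 — of the leader's value equals max over b ∈ B of the optimal value of the program: maximize Σ_{a∈A} σ(a) u1(a,b) − c over σ ∈ Δ(A) and c ≥ 0 subject to Σ_{a∈A} σ(a) u2(a,b) + c ≥ Σ_{a∈A} σ(a) u2(a,b') for every b' ∈ B. Moreover, both the outer supremum and each inner program's optimum are attained. -/

import Mathlib

open Finset

noncomputable section

/-- A probability distribution on a finite type, given as a weight function. -/
def IsDist {X : Type*} [Fintype X] (σ : X → ℝ) : Prop :=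
  (∀ x, 0 ≤ σ x) ∧ ∑ x, σ x = 1

/-- Follower's induced utility under commitment `(σ, P)` when playing `b`. -/
def folU {A B : Type*} [Fintype A] (u2 : A → B → ℝ) (σ : A → ℝ) (P : A → B → ℝ) (b : B) : ℝ :=
  ∑ a, σ a * (u2 a b + P a b)

/-- Leader's utility under commitment `(σ, P)` when the follower plays `b`. -/
def leadU {A B : Type*} [Fintype A] (u1 : A → B → ℝ) (σ : A → ℝ) (P : A → B → ℝ) (b : B) : ℝ :=
  ∑ a, σ a * (u1 a b - P a b)

/-- The leader's value of the commitment `(σ, P)`: the follower plays an action maximizing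
his induced utility, tiebreaking in favor of the leader. -/
def leaderValue {A B : Type*} [Fintype A] [Fintype B] (u1 u2 : A → B → ℝ)
    (σ : A → ℝ) (P : A → B → ℝ) : ℝ :=
  sSup {x | ∃ b : B, (∀ b' : B, folU u2 σ P b' ≤ folU u2 σ P b) ∧ x = leadU u1 σ P b}

/-- The set of leader values achievable by commitments `(σ, P)`. -/
def CommitVals {A B : Type*} [Fintype A] [Fintype B] (u1 u2 : A → B → ℝ) : Set ℝ :=
  {x | ∃ (σ : A → ℝ) (P : A → B → ℝ), IsDist σ ∧ (∀ a b, 0 ≤ P a b) ∧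
    x = leaderValue u1 u2 σ P}

/-- The feasible objective values of the LP for incentivizing the follower action `b`:
maximize `Σ_a σ(a) u1(a,b) − c` over `σ ∈ Δ(A)` and `c ≥ 0` subject to
`Σ_a σ(a) u2(a,b) + c ≥ Σ_a σ(a) u2(a,b')` for every `b'`. -/
def InnerSet {A B : Type*} [Fintype A] (u1 u2 : A → B → ℝ) (b : B) : Set ℝ :=
  {x | ∃ (σ : A → ℝ) (c : ℝ), IsDist σ ∧ 0 ≤ c ∧
    (∀ b' : B, (∑ a, σ a * u2 a b') ≤ (∑ a, σ a * u2 a b) + c) ∧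
    x = (∑ a, σ a * u1 a b) - c}

lemma isDist_iff_mem {A : Type*} [Fintype A] (σ : A → ℝ) :
    IsDist σ ↔ σ ∈ stdSimplex ℝ A := Iff.rfl

lemma inner_exists_greatest {A B : Type*} [Fintype A] [Fintype B] [Nonempty A] [Nonempty B]
    (u1 u2 : A → B → ℝ) (b : B) : ∃ m, IsGreatest (InnerSet u1 u2 b) m := by
  classical
  set c0 : (A → ℝ) → ℝ := fun σ =>
    max 0 (univ.sup' univ_nonempty fun b' => (∑ a, σ a * u2 a b') - (∑ a, σ a * u2 a b)) with hc0
  set g : (A → ℝ) → ℝ := fun σ => (∑ a, σ a * u1 a b) - c0 σ with hg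
  have hsum : ∀ (v : A → ℝ), Continuous fun σ : A → ℝ => ∑ a, σ a * v a := fun v =>
    continuous_finset_sum _ fun a _ => (continuous_apply a).mul continuous_const
  have hgc : Continuous g := by
    apply ((hsum _).sub (Continuous.max continuous_const ?_))
    exact Continuous.finset_sup'_apply univ_nonempty fun b' _ => (hsum _).sub (hsum _)
  obtain ⟨σs, hσs, hmax⟩ := (isCompact_stdSimplex ℝ A).exists_isMaxOn
    ⟨_, ite_eq_mem_stdSimplex ℝ (Classical.arbitrary A)⟩ hgc.continuousOn
  have hsup_le : ∀ σ : A → ℝ, ∀ b' : B,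
      (∑ a, σ a * u2 a b') - (∑ a, σ a * u2 a b) ≤ c0 σ := fun σ b' =>
    le_trans (Finset.le_sup' (fun b'' => (∑ a, σ a * u2 a b'') - (∑ a, σ a * u2 a b)) (mem_univ b')) (le_max_right _ _)
  refine ⟨g σs, ⟨σs, c0 σs, hσs, le_max_left _ _, fun b' => by linarith [hsup_le σs b'], rfl⟩, ?_⟩
  rintro x ⟨σ, c, hσ, hc, hcons, rfl⟩
  have hcc : c0 σ ≤ c := by
    refine max_le hc (Finset.sup'_le _ _ fun b' _ => by linarith [hcons b'])
  calc (∑ a, σ a * u1 a b) - c ≤ g σ := by simp only [hg]; linarith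
    _ ≤ g σs := hmax hσ

theorem stmt16 {A B : Type*} [Fintype A] [Fintype B] [Nonempty A] [Nonempty B]
    (u1 u2 : A → B → ℝ) :
    IsGreatest (CommitVals u1 u2) (sSup {y | ∃ b : B, y = sSup (InnerSet u1 u2 b)})
    ∧ ∀ b : B, IsGreatest (InnerSet u1 u2 b) (sSup (InnerSet u1 u2 b)) := by
  classical
  have part2 : ∀ b : B, IsGreatest (InnerSet u1 u2 b) (sSup (InnerSet u1 u2 b)) := by
    intro b
    obtain ⟨m, hm⟩ := inner_exists_greatest u1 u2 b
    rwa [hm.csSup_eq]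
  set Y : Set ℝ := {y | ∃ b : B, y = sSup (InnerSet u1 u2 b)} with hY
  have hYr : Y = Set.range (fun b => sSup (InnerSet u1 u2 b)) := by
    ext y; simp [hY, eq_comm]
  have hYfin : Y.Finite := hYr ▸ Set.finite_range _
  have hYne : Y.Nonempty := ⟨_, Classical.arbitrary B, rfl⟩
  set M : ℝ := sSup Y with hM
  have sum_split : ∀ (σ f g : A → ℝ), ∑ a, σ a * (f a + g a) = ∑ a, σ a * f a + ∑ a, σ a * g a := by
    intro σ f g
    rw [← Finset.sum_add_distrib]; exact Finset.sum_congr rfl fun a _ => mul_add _ _ _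
  have sum_split' : ∀ (σ f g : A → ℝ), ∑ a, σ a * (f a - g a) = ∑ a, σ a * f a - ∑ a, σ a * g a := by
    intro σ f g
    rw [← Finset.sum_sub_distrib]; exact Finset.sum_congr rfl fun a _ => mul_sub _ _ _
  -- upper bound
  have hub : ∀ x ∈ CommitVals u1 u2, x ≤ M := by
    rintro x ⟨σ, P, hσ, hP, rfl⟩
    set S : Set ℝ :=
      {x | ∃ b : B, (∀ b' : B, folU u2 σ P b' ≤ folU u2 σ P b) ∧ x = leadU u1 σ P b} with hS
    have hSfin : S.Finite := by
      apply Set.Finite.subset (Set.finite_range (leadU u1 σ P))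
      rintro y ⟨b, _, rfl⟩; exact ⟨b, rfl⟩
    have hSne : S.Nonempty := by
      obtain ⟨b, -, hb⟩ := Finset.exists_max_image univ (folU u2 σ P) univ_nonempty
      exact ⟨leadU u1 σ P b, b, fun b' => hb b' (mem_univ b'), rfl⟩
    have hmem : leaderValue u1 u2 σ P ∈ S := hSne.csSup_mem hSfin
    obtain ⟨b, hbest, heq⟩ := hmem
    have hfol : ∀ b', folU u2 σ P b' = (∑ a, σ a * u2 a b') + ∑ a, σ a * P a b' := by
      intro b'; exact sum_split σ _ _
    have hlead : leadU u1 σ P b = (∑ a, σ a * u1 a b) - ∑ a, σ a * P a b :=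
      sum_split' σ _ _
    have hPn : ∀ b', 0 ≤ ∑ a, σ a * P a b' := fun b' =>
      Finset.sum_nonneg fun a _ => mul_nonneg (hσ.1 a) (hP a b')
    have hin : leadU u1 σ P b ∈ InnerSet u1 u2 b := by
      refine ⟨σ, ∑ a, σ a * P a b, hσ, hPn b, fun b' => ?_, hlead⟩
      have := hbest b'
      rw [hfol b', hfol b] at this
      linarith [hPn b']
    calc leaderValue u1 u2 σ P = leadU u1 σ P b := heq
      _ ≤ sSup (InnerSet u1 u2 b) := (part2 b).2 hin
      _ ≤ M := le_csSup hYfin.bddAbove ⟨b, rfl⟩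
  -- membership
  obtain ⟨bs, hbs⟩ : M ∈ Y := hYne.csSup_mem hYfin
  have hMin : M ∈ InnerSet u1 u2 bs := hbs ▸ (part2 bs).1
  obtain ⟨σ, c, hσ, hc, hcons, hMeq⟩ := hMin
  set P : A → B → ℝ := fun _ b' => if b' = bs then c else 0 with hPdef
  have hP : ∀ a b', 0 ≤ P a b' := by
    intro a b'; simp only [hPdef]; split <;> simp [hc]
  have hfol : ∀ b', folU u2 σ P b' = (∑ a, σ a * u2 a b') + (if b' = bs then c else 0) := by
    intro b'
    rw [show folU u2 σ P b' = (∑ a, σ a * u2 a b') + ∑ a, σ a * P a b' from sum_split σ _ _]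
    congr 1
    simp only [hPdef]
    split <;> simp [← Finset.sum_mul, hσ.2]
  have hlead : leadU u1 σ P bs = (∑ a, σ a * u1 a bs) - c := by
    rw [show leadU u1 σ P bs = (∑ a, σ a * u1 a bs) - ∑ a, σ a * P a bs from sum_split' σ _ _]
    congr 1
    simp [hPdef, ← Finset.sum_mul, hσ.2]
  have hbest : ∀ b', folU u2 σ P b' ≤ folU u2 σ P bs := by
    intro b'
    rw [hfol b', hfol bs, if_pos rfl]
    by_cases h : b' = bs
    · rw [if_pos h, h]
    · rw [if_neg h]; linarith [hcons b']
  set S : Set ℝ :=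
    {x | ∃ b : B, (∀ b' : B, folU u2 σ P b' ≤ folU u2 σ P b) ∧ x = leadU u1 σ P b} with hS
  have hSfin : S.Finite := by
    apply Set.Finite.subset (Set.finite_range (leadU u1 σ P))
    rintro y ⟨b, _, rfl⟩; exact ⟨b, rfl⟩
  have hMS : M ∈ S := ⟨bs, hbest, by rw [hlead, hMeq]⟩
  have h1 : M ≤ leaderValue u1 u2 σ P := le_csSup hSfin.bddAbove hMS
  have h2 : leaderValue u1 u2 σ P ≤ M := hub _ ⟨σ, P, hσ, hP, rfl⟩
  have hMe : M = leaderValue u1 u2 σ P := le_antisymm h1 h2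
  exact ⟨⟨⟨σ, P, hσ, hP, hMe⟩, hub⟩, part2⟩
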